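/- For any prime p and any integer k ≥ 2 coprime to p, the tower sequence t_0 = k, t_{j+1} = k^{t_j} converges in ℤ_p; if instead p divides k, the sequence converges to 0 in ℤ_p. -/

import Mathlib

open Filter

private lemma tower_ge (k : ℕ) (hk : 2 ≤ k) (t : ℕ → ℕ)
    (htrec : ∀ j, t (j + 1) = k ^ t j) : ∀ j, j ≤ t j := by
  intro j
  induction j with
  | zero => exact Nat.zero_le _
  | succ n ih =>
    rw [htrec]
    calc n + 1 ≤ t n + 1 := by omega
      _ ≤ 2 ^ t n := Nat.succ_le_of_lt (Nat.lt_two_pow_self)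
      _ ≤ k ^ t n := Nat.pow_le_pow_left hk _

private lemma tower_eventually_const (k : ℕ) (hk : 2 ≤ k) (t : ℕ → ℕ)
    (htrec : ∀ j, t (j + 1) = k ^ t j) :
    ∀ m : ℕ, 0 < m → ∃ N, ∀ i, N ≤ i → ∀ j, N ≤ j → t i ≡ t j [MOD m] := by
  intro m
  induction m using Nat.strong_induction_on with
  | _ m IH =>
    intro hm
    rcases eq_or_lt_of_le (show 1 ≤ m from hm) with h1 | h2
    · exact ⟨0, fun i _ j _ => by simp [← h1, Nat.modEq_one]⟩
    have hm0 : m ≠ 0 := by omega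
    have hk0 : k ≠ 0 := by omega
    set a := m.gcd (k ^ m) with ha_def
    have ha_dvd_m : a ∣ m := Nat.gcd_dvd_left _ _
    have ha_dvd_k : a ∣ k ^ m := Nat.gcd_dvd_right _ _
    have ha0 : a ≠ 0 := fun h => hm0 (Nat.eq_zero_of_gcd_eq_zero_left h)
    set b := m / a with hb_def
    have hab : a * b = m := Nat.mul_div_cancel' ha_dvd_m
    have hb0 : b ≠ 0 := by rintro h; rw [h, mul_zero] at hab; omega
    have hb_dvd_m : b ∣ m := ⟨a, by rw [← hab]; ring⟩
    -- primes dividing k do not divide b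
    have hbfact : ∀ q : ℕ, q.Prime → q ∣ k → ¬ q ∣ b := by
      intro q hq hqk hqb
      have hbf : b.factorization q = 0 := by
        have h1 : b.factorization = m.factorization - a.factorization :=
          Nat.factorization_div ha_dvd_m
        have h2 : a.factorization = m.factorization ⊓ (k ^ m).factorization :=
          Nat.factorization_gcd hm0 (pow_ne_zero m hk0)
        have h3 : (k ^ m).factorization q = m * k.factorization q := by
          rw [Nat.factorization_pow, Finsupp.smul_apply, smul_eq_mul]
        have h4 : 1 ≤ k.factorization q := hq.factorization_pos_of_dvd hk0 hqk
        have h5 : m.factorization q < m := Nat.factorization_lt q hm0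
        have h6 : a.factorization q = m.factorization q := by
          rw [h2, Finsupp.inf_apply, h3]
          exact min_eq_left (by nlinarith)
        rw [h1, Finsupp.tsub_apply, h6]
        omega
      have := (hq.dvd_iff_one_le_factorization hb0).mp hqb
      omega
    have hkb : Nat.Coprime k b := by
      rw [Nat.Coprime]
      by_contra hne
      obtain ⟨q, hq, hqd⟩ := Nat.exists_prime_and_dvd hne
      exact hbfact q hq (hqd.trans (Nat.gcd_dvd_left _ _))
        (hqd.trans (Nat.gcd_dvd_right _ _))
    have haco : Nat.Coprime a b := by
      rw [Nat.Coprime]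
      by_contra hne
      obtain ⟨q, hq, hqd⟩ := Nat.exists_prime_and_dvd hne
      have hqa : q ∣ a := hqd.trans (Nat.gcd_dvd_left _ _)
      have hqk : q ∣ k := hq.dvd_of_dvd_pow (hqa.trans ha_dvd_k)
      exact hbfact q hq hqk (hqd.trans (Nat.gcd_dvd_right _ _))
    -- eventually 0 mod a
    have hmodA : ∀ i, m + 1 ≤ i → a ∣ t i := by
      intro i hi
      obtain ⟨i', rfl⟩ : ∃ i', i = i' + 1 := ⟨i - 1, by omega⟩
      rw [htrec]
      refine ha_dvd_k.trans (pow_dvd_pow k ?_)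
      have := tower_ge k hk t htrec i'
      omega
    -- eventually constant mod b
    obtain ⟨Nb, hNb⟩ : ∃ Nb, ∀ i, Nb ≤ i → ∀ j, Nb ≤ j → t i ≡ t j [MOD b] := by
      rcases eq_or_lt_of_le (Nat.one_le_iff_ne_zero.mpr hb0) with hb1 | hb2
      · exact ⟨0, fun i _ j _ => by simp [← hb1, Nat.modEq_one]⟩
      · haveI : NeZero b := ⟨hb0⟩
        set u : (ZMod b)ˣ := ZMod.unitOfCoprime k hkb with hu
        have hd1 : 0 < orderOf u := orderOf_pos u
        have hdm : orderOf u < m := by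
          have h1 : orderOf u ∣ Fintype.card (ZMod b)ˣ := orderOf_dvd_card
          have h2 : Fintype.card (ZMod b)ˣ = b.totient := ZMod.card_units_eq_totient b
          have h3 : b.totient < b := Nat.totient_lt b hb2
          have hbm : b ≤ m := Nat.le_of_dvd (by omega) hb_dvd_m
          have h4 := Nat.le_of_dvd (by rw [h2]; exact Nat.totient_pos.mpr (by omega)) h1
          omega
        obtain ⟨N, hN⟩ := IH (orderOf u) hdm hd1
        refine ⟨N + 1, ?_⟩
        intro i hi j hj
        obtain ⟨i', rfl⟩ : ∃ i', i = i' + 1 := ⟨i - 1, by omega⟩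
        obtain ⟨j', rfl⟩ : ∃ j', j = j' + 1 := ⟨j - 1, by omega⟩
        rw [htrec, htrec, ← ZMod.natCast_eq_natCast_iff]
        have hpow : u ^ t i' = u ^ t j' :=
          pow_eq_pow_iff_modEq.mpr (hN i' (by omega) j' (by omega))
        have := congrArg (Units.val (α := ZMod b)) hpow
        simpa [hu, ZMod.coe_unitOfCoprime] using this
    refine ⟨max (m + 1) Nb, fun i hi j hj => ?_⟩
    have hA : t i ≡ t j [MOD a] :=
      ((Nat.modEq_zero_iff_dvd).mpr (hmodA i (le_trans (le_max_left _ _) hi))).trans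
        ((Nat.modEq_zero_iff_dvd).mpr (hmodA j (le_trans (le_max_left _ _) hj))).symm
    have hB : t i ≡ t j [MOD b] :=
      hNb i (le_trans (le_max_right _ _) hi) j (le_trans (le_max_right _ _) hj)
    have := (Nat.modEq_and_modEq_iff_modEq_mul haco).mp ⟨hA, hB⟩
    rwa [hab] at this

/-- The power tower `t 0 = k`, `t (j+1) = k ^ t j` converges in `ℤ_p` when
`gcd(k, p) = 1`, and converges to `0` when `p ∣ k`. -/
theorem padic_tetration_converges (p : ℕ) [Fact p.Prime] (k : ℕ) (hk : 2 ≤ k)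
    (t : ℕ → ℕ) (ht0 : t 0 = k) (htrec : ∀ j, t (j + 1) = k ^ t j) :
    (Nat.Coprime k p →
      ∃ x : ℤ_[p], Tendsto (fun j => ((t j : ℤ_[p]))) atTop (nhds x)) ∧
    (p ∣ k → Tendsto (fun j => ((t j : ℤ_[p]))) atTop (nhds 0)) := by
  have hp := (Fact.out : p.Prime)
  have hp1 : (1 : ℝ) < p := by exact_mod_cast hp.one_lt
  have hppos : (0 : ℝ) < p := by linarith
  -- for every ε > 0 there is n with p^(-n) < ε
  have hsmall : ∀ ε : ℝ, 0 < ε → ∃ n : ℕ, ((p : ℝ) ^ (-(n : ℤ))) < ε := by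
    intro ε hε
    obtain ⟨n, hn⟩ := exists_pow_lt_of_lt_one hε (by
      rw [inv_lt_one_iff₀]; right; exact hp1 : (p : ℝ)⁻¹ < 1)
    exact ⟨n, by rwa [zpow_neg, zpow_natCast, ← inv_pow]⟩
  constructor
  · intro _
    apply cauchySeq_tendsto_of_complete
    rw [Metric.cauchySeq_iff]
    intro ε hε
    obtain ⟨n, hn⟩ := hsmall ε hε
    obtain ⟨N, hN⟩ := tower_eventually_const k hk t htrec (p ^ n) (pow_pos hp.pos n)
    refine ⟨N, fun i hi j hj => ?_⟩
    have hdvd : ((p : ℤ) ^ n) ∣ ((t j : ℤ) - (t i : ℤ)) := by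
      have := (hN i hi j hj).dvd
      exact_mod_cast this
    have hnorm : ‖((t i : ℤ_[p]) - (t j : ℤ_[p]))‖ ≤ (p : ℝ) ^ (-(n : ℤ)) := by
      have : ((t i : ℤ_[p]) - (t j : ℤ_[p])) = (((t i : ℤ) - (t j : ℤ) : ℤ) : ℤ_[p]) := by
        push_cast; ring
      rw [this, PadicInt.norm_int_le_pow_iff_dvd]
      exact dvd_sub_comm.mp hdvd
    calc dist ((t i : ℤ_[p])) ((t j : ℤ_[p])) = ‖((t i : ℤ_[p]) - (t j : ℤ_[p]))‖ :=
          dist_eq_norm _ _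
      _ ≤ (p : ℝ) ^ (-(n : ℤ)) := hnorm
      _ < ε := hn
  · intro hpk
    rw [Metric.tendsto_atTop]
    intro ε hε
    obtain ⟨n, hn⟩ := hsmall ε hε
    refine ⟨n + 1, fun j hj => ?_⟩
    obtain ⟨j', rfl⟩ : ∃ j', j = j' + 1 := ⟨j - 1, by omega⟩
    have hdvd : ((p : ℤ) ^ n) ∣ (t (j' + 1) : ℤ) := by
      have h1 : p ^ n ∣ t (j' + 1) := by
        rw [htrec]
        calc p ^ n ∣ p ^ t j' := pow_dvd_pow p (by have := tower_ge k hk t htrec j'; omega)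
          _ ∣ k ^ t j' := pow_dvd_pow_of_dvd hpk _
      exact_mod_cast h1
    have hnorm : ‖((t (j' + 1) : ℤ_[p]))‖ ≤ (p : ℝ) ^ (-(n : ℤ)) := by
      have : ((t (j' + 1) : ℕ) : ℤ_[p]) = (((t (j' + 1) : ℤ)) : ℤ_[p]) := by push_cast; ring
      rw [this, PadicInt.norm_int_le_pow_iff_dvd]
      exact hdvd
    rw [dist_eq_norm, sub_zero]
    exact lt_of_le_of_lt hnorm hn
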